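/- Let R be a terminating TRS. Define θ on constructors additively (θ(c)=0 for 0-ary c, θ(c)(X̄)=ΣX_i+1 otherwise) and for defined f of arity n set θ(f)(X₁,…,Xₙ) = (Σ X_i + 1)·|R|^{rc_R(Σ X_i + 1)}, where rc_R is the runtime complexity function. Then θ is a sup-interpretation: whenever f(v₁,…,vₙ) reduces to a constructor term v, θ(f)(|v₁|,…,|vₙ|) ≥ |v| = θ(v). -/

import Mathlib

open scoped NNReal

inductive Trm (Sym : Type) : Type where
  | var : ℕ → Trm Sym
  | app : Sym → List (Trm Sym) → Trm Sym

namespace Trm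

variable {Sym : Type}

/-- The size of a term: number of symbol occurrences. -/
def size : Trm Sym → ℕ
  | .var _ => 1
  | .app _ ts => 1 + (ts.attach.map (fun t => size t.1)).sum
decreasing_by all_goals (simp only [Trm.app.sizeOf_spec]; have := List.sizeOf_lt_of_mem t.2; omega)

/-- Applying a substitution to a term. -/
def subst (σ : ℕ → Trm Sym) : Trm Sym → Trm Sym
  | .var i => σ i
  | .app f ts => .app f (ts.attach.map (fun t => subst σ t.1))
decreasing_by all_goals (simp only [Trm.app.sizeOf_spec]; have := List.sizeOf_lt_of_mem t.2; omega)

/-- Interpretation of a term with respect to an assignment `θ` and a valuation `ρ`. -/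
def interp (θ : Sym → List ℝ≥0 → ℝ≥0) (ρ : ℕ → ℝ≥0) : Trm Sym → ℝ≥0
  | .var i => ρ i
  | .app f ts => θ f (ts.attach.map (fun t => interp θ ρ t.1))
decreasing_by all_goals (simp only [Trm.app.sizeOf_spec]; have := List.sizeOf_lt_of_mem t.2; omega)

/-- Constructor terms: closed terms all of whose symbols belong to `C`. -/
inductive CTerm (C : Set Sym) : Trm Sym → Prop
  | app : ∀ (c : Sym) (ts : List (Trm Sym)), c ∈ C → (∀ t ∈ ts, CTerm C t) →
      CTerm C (.app c ts)

/-- `VarIn x t` : the variable `x` occurs in the term `t`. -/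
inductive VarIn (x : ℕ) : Trm Sym → Prop
  | var : VarIn x (.var x)
  | app : ∀ (f : Sym) (ts : List (Trm Sym)) (t : Trm Sym), t ∈ ts → VarIn x t →
      VarIn x (.app f ts)

/-- `Sub s t` : `s` is a subterm of `t`. -/
inductive Sub : Trm Sym → Trm Sym → Prop
  | refl : ∀ t, Sub t t
  | app : ∀ (s t : Trm Sym) (f : Sym) (ts : List (Trm Sym)), t ∈ ts → Sub s t →
      Sub s (.app f ts)

end Trm

/-- One-hole contexts. -/
inductive Ctx (Sym : Type) : Type where
  | hole : Ctx Sym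
  | app : Sym → List (Trm Sym) → Ctx Sym → List (Trm Sym) → Ctx Sym

/-- Filling the hole of a context with a term. -/
def Ctx.fill {Sym : Type} : Ctx Sym → Trm Sym → Trm Sym
  | .hole, t => t
  | .app f pre C post, t => .app f (pre ++ C.fill t :: post)

/-- One-step rewriting with respect to a set of rules `R`. -/
def Rw {Sym : Type} (R : List (Trm Sym × Trm Sym)) (s t : Trm Sym) : Prop :=
  ∃ (Cx : Ctx Sym) (l r : Trm Sym) (σ : ℕ → Trm Sym),
    (l, r) ∈ R ∧ s = Cx.fill (Trm.subst σ l) ∧ t = Cx.fill (Trm.subst σ r)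

/-- `n`-step rewriting. -/
def RwN {Sym : Type} (R : List (Trm Sym × Trm Sym)) : ℕ → Trm Sym → Trm Sym → Prop
  | 0 => Eq
  | n + 1 => fun s t => ∃ u, Rw R s u ∧ RwN R n u t

/-- A monotonic assignment. -/
def MonoAssign {Sym : Type} (θ : Sym → List ℝ≥0 → ℝ≥0) : Prop :=
  ∀ (f : Sym) (xs ys : List ℝ≥0), List.Forall₂ (· ≤ ·) xs ys → θ f xs ≤ θ f ys

/-- A strictly monotonic assignment. -/
def StrictMonoAssign {Sym : Type} (θ : Sym → List ℝ≥0 → ℝ≥0) : Prop :=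
  ∀ (f : Sym) (pre post : List ℝ≥0) (x y : ℝ≥0), x < y →
    θ f (pre ++ x :: post) < θ f (pre ++ y :: post)

/-- The subterm property. -/
def SubtermAssign {Sym : Type} (θ : Sym → List ℝ≥0 → ℝ≥0) : Prop :=
  ∀ (f : Sym) (xs : List ℝ≥0) (x : ℝ≥0), x ∈ xs → x ≤ θ f xs

/-- An additive assignment with constructor constants `k c`. -/
def AdditiveAssign {Sym : Type} (C : Set Sym) (k : Sym → ℝ≥0)
    (θ : Sym → List ℝ≥0 → ℝ≥0) : Prop :=
  ∀ c ∈ C, (1 ≤ k c) ∧ θ c [] = 0 ∧ ∀ xs : List ℝ≥0, xs ≠ [] → θ c xs = xs.sum + k c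

open Trm

section Aux

variable {Sym : Type}

lemma size_app' (f : Sym) (ts : List (Trm Sym)) :
    size (Trm.app f ts) = 1 + (ts.map size).sum := by
  rw [size]
  congr 1
  rw [← List.attach_map_val (l := ts) (f := size)]

lemma subst_app' (σ : ℕ → Trm Sym) (f : Sym) (ts : List (Trm Sym)) :
    subst σ (Trm.app f ts) = Trm.app f (ts.map (subst σ)) := by
  rw [subst]
  congr 1
  rw [← List.attach_map_val (l := ts) (f := subst σ)]

lemma one_le_size : ∀ t : Trm Sym, 1 ≤ size t
  | .var _ => by simp [size]
  | .app f ts => by rw [size_app']; omega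

lemma size_sigma_le (σ : ℕ → Trm Sym) {x : ℕ} {t : Trm Sym} (h : VarIn x t) :
    size (σ x) ≤ size (subst σ t) := by
  induction h with
  | var => simp [subst]
  | app f ts t hmem hvin ih =>
    rw [subst_app', size_app']
    have hmem' : size (subst σ t) ∈ (ts.map (subst σ)).map size := by
      simp only [List.map_map, List.mem_map]
      exact ⟨t, hmem, rfl⟩
    have := List.single_le_sum (l := (ts.map (subst σ)).map size)
      (fun x _ => Nat.zero_le x) _ hmem'
    omega

lemma sum_map_mul_aux (ts : List (Trm Sym)) (B : ℕ) :
    (ts.map (fun u => size u * B)).sum = (ts.map size).sum * B := by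
  induction ts with
  | nil => simp
  | cons a l ihl => simp [ihl, add_mul]

lemma size_subst_le (σ : ℕ → Trm Sym) (B : ℕ) (hB : 1 ≤ B) :
    ∀ t : Trm Sym, (∀ x, VarIn x t → size (σ x) ≤ B) →
      size (subst σ t) ≤ size t * B
  | .var i, h => by simpa [subst, size] using h i .var
  | .app f ts, h => by
    rw [subst_app', size_app', size_app', List.map_map]
    have hsum : ((ts.map (size ∘ subst σ)).sum) ≤ (ts.map (fun u => size u * B)).sum := by
      apply List.sum_le_sum
      intro u hu
      have := List.sizeOf_lt_of_mem hu
      exact size_subst_le σ B hB u (fun x hx => h x (.app f ts u hu hx))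
    have heq : (ts.map (fun u => size u * B)).sum = (ts.map size).sum * B :=
      sum_map_mul_aux ts B
    calc 1 + (ts.map (size ∘ subst σ)).sum
        ≤ 1 + (ts.map size).sum * B := by rw [← heq]; omega
      _ ≤ (1 + (ts.map size).sum) * B := by nlinarith
decreasing_by simp only [Trm.app.sizeOf_spec]; have := List.sizeOf_lt_of_mem hu; omega

lemma fill_size (Cx : Ctx Sym) : ∃ c, ∀ t, size (Cx.fill t) = c + size t := by
  induction Cx with
  | hole => exact ⟨0, fun t => by simp [Ctx.fill]⟩
  | app f pre c post ih =>
    obtain ⟨k, hk⟩ := ih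
    refine ⟨1 + (pre.map size).sum + k + (post.map size).sum, fun t => ?_⟩
    simp only [Ctx.fill, size_app', List.map_append, List.map_cons, List.sum_append,
      List.sum_cons, hk t]
    ring

lemma rw_size_le (R : List (Trm Sym × Trm Sym))
    (hvar : ∀ p ∈ R, ∀ x : ℕ, VarIn x p.2 → VarIn x p.1)
    (hR : 1 ≤ (R.map fun p => size p.1 + size p.2).sum)
    {s t : Trm Sym} (h : Rw R s t) :
    size t ≤ size s * (R.map fun p => size p.1 + size p.2).sum := by
  set Q := (R.map fun p => size p.1 + size p.2).sum with hQ
  obtain ⟨Cx, l, r, σ, hlr, hs, ht⟩ := h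
  obtain ⟨c, hc⟩ := fill_size Cx
  have hrQ : size r ≤ Q := by
    have hmem : size l + size r ∈ R.map fun p => size p.1 + size p.2 :=
      List.mem_map.2 ⟨(l, r), hlr, rfl⟩
    have := List.single_le_sum (l := R.map fun p => size p.1 + size p.2)
      (fun x _ => Nat.zero_le x) _ hmem
    omega
  have hA : 1 ≤ size (subst σ l) := one_le_size _
  have hsub : size (subst σ r) ≤ size r * size (subst σ l) :=
    size_subst_le σ _ hA r (fun x hx => size_sigma_le σ (hvar (l, r) hlr x hx))
  rw [hs, ht, hc, hc]
  calc c + size (subst σ r) ≤ c + size r * size (subst σ l) := by omega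
    _ ≤ (c + size (subst σ l)) * Q := by nlinarith

lemma rwN_size_le (R : List (Trm Sym × Trm Sym))
    (hvar : ∀ p ∈ R, ∀ x : ℕ, VarIn x p.2 → VarIn x p.1)
    (hR : 1 ≤ (R.map fun p => size p.1 + size p.2).sum) :
    ∀ (n : ℕ) (s t : Trm Sym), RwN R n s t →
      size t ≤ size s * (R.map fun p => size p.1 + size p.2).sum ^ n := by
  intro n
  induction n with
  | zero => intro s t h; simp_all [RwN]
  | succ m ih =>
    intro s t h
    obtain ⟨u, h1, h2⟩ := h
    have hu := rw_size_le R hvar hR h1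
    have ht := ih u t h2
    calc size t ≤ size u * (R.map fun p => size p.1 + size p.2).sum ^ m := ht
      _ ≤ (size s * (R.map fun p => size p.1 + size p.2).sum) *
            (R.map fun p => size p.1 + size p.2).sum ^ m :=
        Nat.mul_le_mul_right _ hu
      _ = size s * (R.map fun p => size p.1 + size p.2).sum ^ (m + 1) := by ring

end Aux

/-- Let `R` be a terminating constructor TRS, and let `rc` bound its runtime complexity
(the maximal derivation length of basic terms, in their size). Then the assignment
sending a defined symbol `f` to `(X₁, …, Xₙ) ↦ (Σ Xᵢ + 1) · |R| ^ (rc (Σ Xᵢ + 1))` is a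
sup-interpretation: whenever a basic term `f (v₁, …, vₙ)` reduces to a constructor term
`v`, we have `(Σ |vᵢ| + 1) · |R| ^ (rc (Σ |vᵢ| + 1)) ≥ |v|`. -/
theorem runtime_complexity_gives_sup_interpretation {Sym : Type}
    (C D : Set Sym) (hCD : Disjoint C D)
    (R : List (Trm Sym × Trm Sym))
    (hvar : ∀ p ∈ R, ∀ x : ℕ, VarIn x p.2 → VarIn x p.1)
    (hR : 1 ≤ (R.map fun p => size p.1 + size p.2).sum)
    (hterm : WellFounded (fun s t : Trm Sym => Rw R t s))
    (rc : ℕ → ℕ)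
    (hrc : ∀ (g : Sym) (us : List (Trm Sym)) (n : ℕ) (s : Trm Sym) (m : ℕ),
      g ∈ D → (∀ t ∈ us, CTerm C t) → RwN R n (.app g us) s →
      size (Trm.app g us) ≤ m → n ≤ rc m)
    (f : Sym) (hf : f ∈ D) (vs : List (Trm Sym)) (hvs : ∀ t ∈ vs, CTerm C t)
    (v : Trm Sym) (hv : CTerm C v) (n : ℕ) (hred : RwN R n (.app f vs) v) :
    size v ≤ ((vs.map size).sum + 1) *
      ((R.map fun p => size p.1 + size p.2).sum) ^ (rc ((vs.map size).sum + 1)) := by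
  set Q := (R.map fun p => size p.1 + size p.2).sum with hQ
  have hsz : size (Trm.app f vs) = (vs.map size).sum + 1 := by rw [size_app']; omega
  have hn : n ≤ rc ((vs.map size).sum + 1) := by
    have := hrc f vs n v (size (Trm.app f vs)) hf hvs hred le_rfl
    rwa [hsz] at this
  have h1 : size v ≤ ((vs.map size).sum + 1) * Q ^ n := by
    have := rwN_size_le R hvar hR n _ v hred
    rwa [hsz] at this
  calc size v ≤ ((vs.map size).sum + 1) * Q ^ n := h1
    _ ≤ ((vs.map size).sum + 1) * Q ^ (rc ((vs.map size).sum + 1)) :=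
      Nat.mul_le_mul_left _ (Nat.pow_le_pow_right hR hn)
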